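/- arXiv:math/0210381 — 9 statements merged into one kernel-verified Lean document; each statement's English description precedes it below -/
import Mathlib

section
/- If I is an ideal containing a regular element in a Noetherian ring R, then the Ratliff-Rush closure of I contains I and is idempotent: taking the Ratliff-Rush closure of the Ratliff-Rush closure gives the Ratliff-Rush closure. -/
/-- The Ratliff–Rush closure of an ideal `I`: the union (supremum) of the increasing
chain of ideals `(I^{n+1} : I^n)` for `n ≥ 0`. -/
noncomputable def ratliffRushClosure {R : Type*} [CommRing R] (I : Ideal R) : Ideal R :=
  ⨆ n : ℕ, Submodule.colon (I ^ (n + 1)) ((I ^ n : Ideal R) : Set R)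

section aux

variable {R : Type*} [CommRing R]

lemma rr_chain_mono (I : Ideal R) :
    Monotone (fun n : ℕ => Submodule.colon (I ^ (n + 1)) ((I ^ n : Ideal R) : Set R)) := by
  apply monotone_nat_of_le_succ
  intro n x hx
  rw [Submodule.mem_colon] at hx ⊢
  intro p hp
  rw [pow_succ] at hp
  refine Submodule.mul_induction_on hp (fun a ha b hb => ?_) (fun y z hy hz => ?_)
  · have h1 : x * a ∈ I ^ (n + 1) := hx a ha
    have : (x * a) * b ∈ I ^ (n + 1) * I := Ideal.mul_mem_mul h1 hb
    rw [← pow_succ] at this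
    simpa [smul_eq_mul, mul_assoc] using this
  · simpa [smul_eq_mul, mul_add] using Ideal.add_mem _ hy hz

lemma le_rr (I : Ideal R) : I ≤ ratliffRushClosure I := by
  intro x hx
  apply Submodule.mem_iSup_of_mem 0
  rw [Submodule.mem_colon]
  intro p _
  simpa [smul_eq_mul] using Ideal.mul_mem_right p I hx

end aux

/-- If `I` is an ideal containing a regular element in a Noetherian ring `R`, then the
Ratliff–Rush closure of `I` contains `I` and is idempotent. -/
theorem ratliffRush_le_and_idem {R : Type*} [CommRing R] [IsNoetherianRing R]
    (I : Ideal R) (hreg : ∃ r ∈ I, r ∈ nonZeroDivisors R) :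
    I ≤ ratliffRushClosure I ∧
      ratliffRushClosure (ratliffRushClosure I) = ratliffRushClosure I := by
  refine ⟨le_rr I, ?_⟩
  -- the chain stabilizes
  obtain ⟨N, hN⟩ := (monotone_stabilizes_iff_noetherian (R := R) (M := R)).mpr
    (by infer_instance) ⟨_, rr_chain_mono I⟩
  set T := ratliffRushClosure I with hT
  have hsup : T = Submodule.colon (I ^ (N + 1)) ((I ^ N : Ideal R) : Set R) := by
    apply le_antisymm
    · apply iSup_le
      intro n
      rcases le_total n N with h | h
      · exact rr_chain_mono I h
      · exact (hN n h).ge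
    · exact le_iSup (fun n : ℕ => Submodule.colon (I ^ (n + 1)) ((I ^ n : Ideal R) : Set R)) N
  -- T * I^m ≤ I^(m+1) for m ≥ N
  have hstep : ∀ m : ℕ, N ≤ m → T * I ^ m ≤ I ^ (m + 1) := by
    intro m hm
    have hTm : T = Submodule.colon (I ^ (m + 1)) ((I ^ m : Ideal R) : Set R) := by
      rw [hsup]; exact hN m hm
    rw [hTm, Ideal.mul_le]
    intro r hr s hs
    rw [Submodule.mem_colon] at hr
    simpa [smul_eq_mul] using hr s hs
  -- T^k * I^N ≤ I^(N+k)
  have hB : ∀ k : ℕ, T ^ k * I ^ N ≤ I ^ (N + k) := by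
    intro k
    induction k with
    | zero => simp
    | succ k ih =>
      have : T ^ (k + 1) * I ^ N = T * (T ^ k * I ^ N) := by ring
      rw [this]
      calc T * (T ^ k * I ^ N) ≤ T * I ^ (N + k) :=
            Ideal.mul_mono_right ih
        _ ≤ I ^ (N + k + 1) := hstep (N + k) (Nat.le_add_right N k)
        _ = I ^ (N + (k + 1)) := by ring_nf
  -- closure T ≤ T
  have hle : ratliffRushClosure T ≤ T := by
    apply iSup_le
    intro m x hx
    rw [Submodule.mem_colon] at hx
    rw [hsup]
    have : x ∈ Submodule.colon (I ^ (N + m + 1)) ((I ^ (N + m) : Ideal R) : Set R) := by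
      rw [Submodule.mem_colon]
      intro q hq
      have hq' : q ∈ I ^ m * I ^ N := by
        rw [SetLike.mem_coe] at hq; rw [← pow_add]; convert hq using 2; ring
      refine Submodule.mul_induction_on hq' (fun a ha b hb => ?_) (fun y z hy hz => ?_)
      · have haT : a ∈ T ^ m := Ideal.pow_right_mono (le_rr I) m ha
        have h1 : x * a ∈ T ^ (m + 1) := by simpa [smul_eq_mul] using hx a haT
        have h2 : (x * a) * b ∈ T ^ (m + 1) * I ^ N := Ideal.mul_mem_mul h1 hb
        have h3 : (x * a) * b ∈ I ^ (N + (m + 1)) := hB (m + 1) h2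
        have heq : N + (m + 1) = N + m + 1 := by ring
        rw [heq] at h3
        simpa [smul_eq_mul, mul_assoc] using h3
      · simpa [smul_eq_mul, mul_add] using Ideal.add_mem _ hy hz
    rcases le_or_gt m N with h | h
    · exact hsup ▸ (hT ▸ Submodule.mem_iSup_of_mem (N + m) this :
        x ∈ ratliffRushClosure I)
    · exact hsup ▸ (hT ▸ Submodule.mem_iSup_of_mem (N + m) this :
        x ∈ ratliffRushClosure I)
  exact le_antisymm hle (le_rr T)
end

section
/- If I is an ideal containing a regular element in a Noetherian ring R, then for all sufficiently large n, the n-th power of the Ratliff-Rush closure of I equals I^n. -/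
namespace RatliffRushAux

variable {R : Type*} [CommRing R] (I : Ideal R)

/-- `W I n = ⋃_k (I^{n+k} : I^k)`, the Ratliff–Rush closure of `I^n`. -/
noncomputable def W (n : ℕ) : Ideal R := ⨆ k : ℕ, Submodule.colon (I ^ (n + k)) ((I ^ k : Ideal R) : Set R)

variable {I}

lemma colon_succ (n k : ℕ) :
    Submodule.colon (I ^ (n + k)) ((I ^ k : Ideal R) : Set R) ≤ Submodule.colon (I ^ (n + (k+1))) ((I ^ (k+1) : Ideal R) : Set R) := by
  intro z hz
  rw [Submodule.mem_colon] at hz ⊢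
  intro p hp
  rw [pow_succ] at hp
  refine Submodule.mul_induction_on hp (fun a ha b hb => ?_) (fun u v hu hv => ?_)
  · have h1 : z * a ∈ I ^ (n + k) := by simpa [smul_eq_mul] using hz a ha
    have h2 : z * a * b ∈ I ^ (n + k) * I := Ideal.mul_mem_mul h1 hb
    rw [← pow_succ] at h2
    have he : n + (k + 1) = (n + k) + 1 := by omega
    rw [he]
    have hz2 : z • (a * b) = z * a * b := by rw [smul_eq_mul]; ring
    rw [hz2]
    exact h2
  · rw [smul_add]
    exact Ideal.add_mem _ hu hv

lemma colon_chain_mono (n : ℕ) :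
    Monotone (fun k => Submodule.colon (I ^ (n + k)) ((I ^ k : Ideal R) : Set R)) :=
  monotone_nat_of_le_succ (fun k => colon_succ n k)

lemma mem_W_iff {n : ℕ} {z : R} :
    z ∈ W I n ↔ ∃ k, ∀ b ∈ I ^ k, z * b ∈ I ^ (n + k) := by
  rw [W, Submodule.mem_iSup_of_directed _ (colon_chain_mono n).directed_le]
  refine exists_congr fun k => ?_
  rw [Submodule.mem_colon]
  simp [smul_eq_mul]

lemma pow_le_W (n : ℕ) : I ^ n ≤ W I n := fun z hz => by
  rw [mem_W_iff]
  exact ⟨0, fun b hb => by simpa using Ideal.mul_mem_right b _ hz⟩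

lemma W_antitone {a b : ℕ} (h : a ≤ b) : W I b ≤ W I a := by
  intro z hz
  rw [mem_W_iff] at hz ⊢
  obtain ⟨k, hk⟩ := hz
  exact ⟨k, fun p hp => Ideal.pow_le_pow_right (by omega) (hk p hp)⟩

lemma mul_mem_W {n m : ℕ} {z a : R} (hz : z ∈ W I n) (ha : a ∈ I ^ m) :
    z * a ∈ W I (n + m) := by
  rw [mem_W_iff] at hz ⊢
  obtain ⟨k, hk⟩ := hz
  refine ⟨k, fun b hb => ?_⟩
  have h1 : z * b ∈ I ^ (n + k) := hk b hb
  have h2 : z * b * a ∈ I ^ (n + k) * I ^ m := Ideal.mul_mem_mul h1 ha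
  rw [← pow_add] at h2
  have he : n + m + k = n + k + m := by omega
  rw [he]
  have hz2 : z * a * b = z * b * a := by ring
  rw [hz2]
  exact h2

lemma W_mul_le (a b : ℕ) : W I a * W I b ≤ W I (a + b) := by
  rw [Ideal.mul_le]
  intro z hz w hw
  rw [mem_W_iff] at hz hw ⊢
  obtain ⟨k₁, hk₁⟩ := hz
  obtain ⟨k₂, hk₂⟩ := hw
  refine ⟨k₁ + k₂, fun p hp => ?_⟩
  rw [pow_add] at hp
  refine Submodule.mul_induction_on hp (fun u hu v hv => ?_) (fun u v hu hv => ?_)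
  · have h1 : z * u ∈ I ^ (a + k₁) := hk₁ u hu
    have h2 : w * v ∈ I ^ (b + k₂) := hk₂ v hv
    have h3 : (z * u) * (w * v) ∈ I ^ (a + k₁) * I ^ (b + k₂) := Ideal.mul_mem_mul h1 h2
    rw [← pow_add] at h3
    have he : a + b + (k₁ + k₂) = a + k₁ + (b + k₂) := by omega
    rw [he]
    have hz2 : z * w * (u * v) = (z * u) * (w * v) := by ring
    rw [hz2]
    exact h3
  · have hz2 : z * w * (u + v) = z * w * u + z * w * v := by ring
    rw [hz2]
    exact Ideal.add_mem _ hu hv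

lemma smul_top_eq (J : Ideal R) : J • (⊤ : Ideal R) = J := by
  rw [Ideal.smul_eq_mul, Ideal.mul_top]

variable (I)

/-- The shifted Ratliff–Rush filtration `j ↦ W (j+1)`. -/
noncomputable def WFil : Ideal.Filtration I R where
  N j := W I (j + 1)
  mono j := W_antitone (by omega)
  smul_le j := by
    rw [Submodule.smul_le]
    intro r hr n hn
    rw [smul_eq_mul, mul_comm]
    exact mul_mem_W hn (show r ∈ I ^ 1 by simpa using hr)

/-- The key "defect" filtration `j ↦ W (j+1) ⊓ I^j`. -/
noncomputable def DFil : Ideal.Filtration I R := WFil I ⊓ Ideal.stableFiltration I ⊤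

lemma DFil_N (j : ℕ) : (DFil I).N j = W I (j + 1) ⊓ I ^ j := by
  show (WFil I).N j ⊓ (Ideal.stableFiltration I ⊤).N j = _
  rw [Ideal.stableFiltration_N, smul_top_eq]
  rfl

variable {I}

lemma finset_common_colon {m : ℕ} (S : Finset R) (h : ∀ s ∈ S, s ∈ W I m) :
    ∃ k, ∀ s ∈ S, s ∈ Submodule.colon (I ^ (m + k)) ((I ^ k : Ideal R) : Set R) := by
  classical
  induction S using Finset.induction with
  | empty => exact ⟨0, by simp⟩
  | @insert a S' ha ih =>
    obtain ⟨k₂, hk₂⟩ := ih (fun s hs => h s (Finset.mem_insert_of_mem hs))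
    have haW := h a (Finset.mem_insert_self a S')
    rw [W, Submodule.mem_iSup_of_directed _ (colon_chain_mono m).directed_le] at haW
    obtain ⟨k₁, hk₁⟩ := haW
    refine ⟨max k₁ k₂, fun s hs => ?_⟩
    rcases Finset.mem_insert.mp hs with h' | h'
    · subst h'; exact colon_chain_mono m (le_max_left k₁ k₂) hk₁
    · exact colon_chain_mono m (le_max_right k₁ k₂) (hk₂ s h')

/-- `(★)`: eventually `W (j+1) ⊓ I^j ≤ I^(j+1)`. -/
lemma star [IsNoetherianRing R] : ∃ M : ℕ, ∀ j, M ≤ j → W I (j + 1) ⊓ I ^ j ≤ I ^ (j + 1) := by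
  have hstable : (DFil I).Stable := by
    rw [DFil]
    exact Ideal.Filtration.Stable.inter_left (WFil I) (Ideal.stableFiltration_stable I ⊤)
  obtain ⟨n₀, hn₀⟩ := hstable.exists_pow_smul_eq
  have hfg : ((DFil I).N n₀).FG := IsNoetherian.noetherian _
  obtain ⟨S, hS⟩ := hfg
  obtain ⟨k, hk⟩ := finset_common_colon (m := n₀ + 1) S (fun s hs => by
    have : s ∈ (DFil I).N n₀ := by
      rw [← hS]; exact Submodule.subset_span hs
    rw [DFil_N, Submodule.mem_inf] at this
    exact this.1)
  have hcolon : (DFil I).N n₀ ≤ Submodule.colon (I ^ (n₀ + 1 + k)) ((I ^ k : Ideal R) : Set R) := by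
    rw [← hS]
    exact Submodule.span_le.mpr (fun s hs => hk s hs)
  have h2 : I ^ k * (DFil I).N n₀ ≤ I ^ (n₀ + 1 + k) := by
    rw [Ideal.mul_le]
    intro r hr z hz
    have h3 := Submodule.mem_colon.mp (hcolon hz) r hr
    rwa [smul_eq_mul, mul_comm] at h3
  refine ⟨n₀ + k, fun j hj => ?_⟩
  obtain ⟨p, rfl⟩ : ∃ p, j = n₀ + (k + p) := ⟨j - n₀ - k, by omega⟩
  have hN : W I (n₀ + (k + p) + 1) ⊓ I ^ (n₀ + (k + p)) = I ^ (k + p) • (DFil I).N n₀ := by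
    rw [← DFil_N]; exact hn₀ (k + p)
  rw [hN, Ideal.smul_eq_mul]
  calc I ^ (k + p) * (DFil I).N n₀ = I ^ p * (I ^ k * (DFil I).N n₀) := by
        rw [pow_add, mul_comm (I ^ k) (I ^ p), mul_assoc]
    _ ≤ I ^ p * I ^ (n₀ + 1 + k) := Ideal.mul_mono_right h2
    _ = I ^ (n₀ + (k + p) + 1) := by rw [← pow_add]; congr 1; omega

lemma climb {M : ℕ} (hM : ∀ j, M ≤ j → W I (j + 1) ⊓ I ^ j ≤ I ^ (j + 1)) :
    ∀ m j, M ≤ j → W I (j + m) ⊓ I ^ j ≤ I ^ (j + m) := by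
  intro m
  induction m with
  | zero => intro j hj; simpa using inf_le_right
  | succ m ih =>
    intro j hj z hz
    rw [Submodule.mem_inf] at hz
    have hz1 : z ∈ I ^ (j + 1) :=
      hM j hj (Submodule.mem_inf.mpr ⟨W_antitone (by omega) hz.1, hz.2⟩)
    have hz2 : z ∈ I ^ ((j + 1) + m) :=
      ih (j + 1) (by omega) (Submodule.mem_inf.mpr ⟨W_antitone (by omega) hz.1, hz1⟩)
    have he : j + (m + 1) = (j + 1) + m := by omega
    rw [he]
    exact hz2

lemma peel [IsNoetherianRing R] {x : R} (hxnzd : x ∈ nonZeroDivisors R) :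
    ∃ c : ℕ, ∀ s : ℕ, ∀ z : R, z * x ∈ I ^ (s + c) → z ∈ I ^ s := by
  obtain ⟨c, hc⟩ := Ideal.exists_pow_inf_eq_pow_smul I (Ideal.span {x})
  refine ⟨c, fun s z hz => ?_⟩
  have h1 : z * x ∈ (I ^ (s + c) • (⊤ : Ideal R)) ⊓ Ideal.span {x} := by
    rw [smul_top_eq]
    exact Submodule.mem_inf.mpr ⟨hz, Ideal.mem_span_singleton.mpr ⟨z, mul_comm z x⟩⟩
  rw [hc (s + c) (by omega)] at h1
  have h2 : z * x ∈ I ^ s • Submodule.span R {x} := by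
    have he : s + c - c = s := by omega
    rw [he] at h1
    have hle : I ^ s • ((I ^ c • (⊤ : Ideal R)) ⊓ Ideal.span {x}) ≤
        I ^ s • Submodule.span R {x} := smul_mono_right _ inf_le_right
    exact hle h1
  rw [Submodule.mem_smul_span_singleton] at h2
  obtain ⟨a, haI, hax⟩ := h2
  have h0 : (z - a) * x = 0 := by
    rw [smul_eq_mul] at hax
    have : a * x = z * x := hax
    ring_nf
    linear_combination -this
  have hza : z - a = 0 := mem_nonZeroDivisors_iff_right.mp hxnzd _ h0
  have : z = a := by
    have := sub_eq_zero.mp hza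
    exact this
  rwa [this]

lemma peel_iter {x : R} {c : ℕ} (hpeel : ∀ s : ℕ, ∀ z : R, z * x ∈ I ^ (s + c) → z ∈ I ^ s) :
    ∀ i s : ℕ, ∀ z : R, z * x ^ i ∈ I ^ (s + i * c) → z ∈ I ^ s := by
  intro i
  induction i with
  | zero => intro s z h; simpa using h
  | succ i ih =>
    intro s z h
    have h1 : (z * x ^ i) * x ∈ I ^ ((s + i * c) + c) := by
      have he : s + (i + 1) * c = (s + i * c) + c := by ring
      have hx2 : z * x ^ (i + 1) = (z * x ^ i) * x := by rw [pow_succ]; ring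
      rw [← he, ← hx2]
      exact h
    exact ih s z (hpeel (s + i * c) (z * x ^ i) h1)

lemma main [IsNoetherianRing R] {x : R} (hxI : x ∈ I) (hxnzd : x ∈ nonZeroDivisors R) :
    ∃ N : ℕ, ∀ n, N ≤ n → W I n = I ^ n := by
  obtain ⟨M, hstar⟩ := star (I := I)
  obtain ⟨c₀, hpeel₀⟩ := peel (I := I) hxnzd
  -- use c = c₀ + 1 ≥ 1
  set c : ℕ := c₀ + 1 with hc
  have hpeel : ∀ s : ℕ, ∀ z : R, z * x ∈ I ^ (s + c) → z ∈ I ^ s := by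
    intro s z hz
    exact hpeel₀ s z (Ideal.pow_le_pow_right (by omega) hz)
  refine ⟨M * c + 2 * M, fun n hn => ?_⟩
  refine le_antisymm ?_ (pow_le_W n)
  intro z hzW
  have hxM : x ^ M ∈ I ^ M := Ideal.pow_mem_pow hxI M
  have h1 : z * x ^ M ∈ W I (n + M) := mul_mem_W hzW hxM
  have h2 : z * x ^ M ∈ I ^ M := Ideal.mul_mem_left _ z hxM
  have h3 : z * x ^ M ∈ I ^ (M + n) := by
    refine climb hstar n M le_rfl (Submodule.mem_inf.mpr ⟨?_, h2⟩)
    have he : M + n = n + M := by omega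
    rw [he]
    exact h1
  -- peel M times: M + n = s₀ + M * c where s₀ = M + n - M * c ≥ 3 M
  obtain ⟨p, hp⟩ : ∃ p, n = M * c + 2 * M + p := ⟨n - (M * c + 2 * M), by omega⟩
  have hs0 : M + n = (3 * M + p) + M * c := by omega
  have h4 : z ∈ I ^ (3 * M + p) := by
    refine peel_iter hpeel M (3 * M + p) z ?_
    rw [← hs0]
    exact h3
  -- climb again from level 3M + p up to n
  have h5 : z ∈ I ^ ((3 * M + p) + (M * c₀)) := by
    refine climb hstar (M * c₀) (3 * M + p) (by omega) (Submodule.mem_inf.mpr ⟨?_, h4⟩)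
    have he : 3 * M + p + M * c₀ = n := by
      rw [hp, hc]; ring
    rw [he]
    exact hzW
  have he : (3 * M + p) + (M * c₀) = n := by rw [hp, hc]; ring
  rwa [he] at h5

end RatliffRushAux

/-- If `I` is an ideal containing a regular element in a Noetherian ring `R`, then for all
sufficiently large `n`, the `n`-th power of the Ratliff–Rush closure of `I` equals `I^n`. -/
theorem pow_ratliffRush_eq_pow {R : Type*} [CommRing R] [IsNoetherianRing R]
    (I : Ideal R) (hreg : ∃ r ∈ I, r ∈ nonZeroDivisors R) :
    ∃ N : ℕ, ∀ n ≥ N, (ratliffRushClosure I) ^ n = I ^ n := by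
  obtain ⟨x, hxI, hxnzd⟩ := hreg
  obtain ⟨N, hN⟩ := RatliffRushAux.main (I := I) hxI hxnzd
  have hRR : ratliffRushClosure I = RatliffRushAux.W I 1 := by
    rw [ratliffRushClosure, RatliffRushAux.W]
    congr 1
    funext k
    rw [add_comm 1 k]
  have hpowW : ∀ m : ℕ, (RatliffRushAux.W I 1) ^ (m + 1) ≤ RatliffRushAux.W I (m + 1) := by
    intro m
    induction m with
    | zero => rw [pow_one]
    | succ m ih =>
      calc (RatliffRushAux.W I 1) ^ (m + 2) = (RatliffRushAux.W I 1) ^ (m + 1) *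
            RatliffRushAux.W I 1 := by rw [pow_succ]
        _ ≤ RatliffRushAux.W I (m + 1) * RatliffRushAux.W I 1 := Ideal.mul_mono_left ih
        _ ≤ RatliffRushAux.W I (m + 1 + 1) := RatliffRushAux.W_mul_le (m + 1) 1
  refine ⟨N + 1, fun n hn => ?_⟩
  obtain ⟨m, rfl⟩ : ∃ m, n = m + 1 := ⟨n - 1, by omega⟩
  refine le_antisymm ?_ ?_
  · rw [hRR]
    exact (hpowW m).trans (le_of_eq (hN (m + 1) (by omega)))
  · refine Ideal.pow_right_mono ?_ (m + 1)
    rw [hRR]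
    have := RatliffRushAux.pow_le_W (I := I) 1
    rwa [pow_one] at this
end

section
/- If I is an ideal containing a regular element in a Noetherian ring R, then for all sufficiently large n, the power I^n is Ratliff-Rush closed, i.e., the Ratliff-Rush closure of I^n equals I^n. -/
open Submodule

section Aux

variable {R : Type*} [CommRing R] [IsNoetherianRing R] (I : Ideal R)

/-- Step 1: the "socle" `(I^(m+2) : I) ⊓ I^m` is contained in `I^(m+1)` for large `m`. -/
theorem rr_step1 : ∃ D : ℕ, ∀ m ≥ D,
    (Submodule.colon (I ^ (m + 2)) I) ⊓ I ^ m ≤ I ^ (m + 1) := by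
  have hcol : ∀ m : ℕ, I • ((Submodule.colon (I ^ (m + 2)) I) ⊓ I ^ m ⊔ I ^ (m + 1))
      ≤ I ^ (m + 2) := by
    intro m
    have h1 : (Submodule.colon (I ^ (m + 2)) I) ⊓ I ^ m ⊔ I ^ (m + 1)
        ≤ Submodule.colon (I ^ (m + 2)) I := by
      refine sup_le inf_le_left ?_
      intro x hx
      rw [Submodule.mem_colon]
      intro p hp
      rw [smul_eq_mul]
      have : x * p ∈ I ^ (m + 1) * I := Ideal.mul_mem_mul hx hp
      rwa [← pow_succ] at this
    refine le_trans (Submodule.smul_mono le_rfl h1) ?_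
    rw [smul_eq_mul]
    refine Submodule.mul_le.mpr ?_
    intro a ha b hb
    rw [Submodule.mem_colon] at hb
    have := hb a ha
    rwa [smul_eq_mul, mul_comm] at this
  have hmono : ∀ m : ℕ, (Submodule.colon (I ^ (m + 1 + 2)) I) ⊓ I ^ (m + 1) ⊔ I ^ (m + 1 + 1)
      ≤ (Submodule.colon (I ^ (m + 2)) I) ⊓ I ^ m ⊔ I ^ (m + 1) := by
    intro m
    refine sup_le (le_sup_of_le_left (inf_le_inf ?_ (Ideal.pow_le_pow_right (by omega))))
      (le_sup_of_le_right (Ideal.pow_le_pow_right (by omega)))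
    intro x hx
    rw [Submodule.mem_colon] at hx ⊢
    exact fun p hp => Ideal.pow_le_pow_right (by omega) (hx p hp)
  let F : I.Filtration R :=
    { N := fun m => (Submodule.colon (I ^ (m + 2)) I) ⊓ I ^ m ⊔ I ^ (m + 1)
      mono := hmono
      smul_le := fun m => le_trans (hcol m) le_sup_right }
  have hle : F ≤ I.stableFiltration ⊤ := by
    intro m
    show F.N m ≤ I ^ m • ⊤
    rw [smul_eq_mul, Ideal.mul_top]
    exact sup_le inf_le_right (Ideal.pow_le_pow_right (by omega))
  obtain ⟨n₀, hn₀⟩ := (Ideal.stableFiltration_stable I ⊤).of_le hle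
  refine ⟨n₀ + 1, fun m hm => ?_⟩
  obtain ⟨n, rfl⟩ : ∃ n, m = n + 1 := ⟨m - 1, by omega⟩
  have hFn : F.N (n + 1) ≤ I ^ (n + 2) := by
    rw [← hn₀ n (by omega)]
    exact hcol n
  refine le_trans (le_trans le_sup_left hFn) (Ideal.pow_le_pow_right (by omega))

/-- Step 2: division by a regular element, via Artin–Rees. -/
theorem rr_step2 {r : R} (hr : r ∈ nonZeroDivisors R) :
    ∃ c : ℕ, ∀ n ≥ c, ∀ x : R, r * x ∈ I ^ n → x ∈ I ^ (n - c) := by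
  obtain ⟨c, hc⟩ := Ideal.exists_pow_inf_eq_pow_smul I (Submodule.span R {r})
  refine ⟨c, fun n hn x hx => ?_⟩
  have hmem : r * x ∈ I ^ n • (⊤ : Submodule R R) ⊓ Submodule.span R {r} := by
    constructor
    · show r * x ∈ I ^ n • (⊤ : Submodule R R)
      rw [smul_eq_mul, Ideal.mul_top]; exact hx
    · show r * x ∈ Submodule.span R {r}
      exact Submodule.mem_span_singleton.mpr ⟨x, by rw [smul_eq_mul, mul_comm]⟩
  rw [hc n hn] at hmem
  have hmem2 : r * x ∈ I ^ (n - c) • Submodule.span R {r} :=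
    Submodule.smul_mono le_rfl inf_le_right hmem
  rw [Submodule.mem_smul_span_singleton] at hmem2
  obtain ⟨a, ha, hax⟩ := hmem2
  rw [smul_eq_mul] at hax
  have h0 : r * (x - a) = 0 := by rw [mul_sub, mul_comm a r] at *; rw [hax]; ring
  have hxa : x - a = 0 := hr.2 _ (by rwa [mul_comm] at h0)
  have hx' : x = a := by linear_combination hxa
  rwa [hx']

end Aux

section Aux2

variable {R : Type*} [CommRing R] [IsNoetherianRing R] (I : Ideal R)

/-- Step 3: `(I^(n+1) : I) = I^n` for all large `n`. -/
theorem rr_step3 (hreg : ∃ r ∈ I, r ∈ nonZeroDivisors R) :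
    ∃ N : ℕ, 1 ≤ N ∧ ∀ n ≥ N, Submodule.colon (I ^ (n + 1)) I = I ^ n := by
  obtain ⟨r, hrI, hr⟩ := hreg
  obtain ⟨D, hD⟩ := rr_step1 I
  obtain ⟨c, hc⟩ := rr_step2 I hr
  refine ⟨D + c + 1, by omega, fun n hn => ?_⟩
  apply le_antisymm
  · intro x hx
    rw [Submodule.mem_colon] at hx
    have hrx : r * x ∈ I ^ (n + 1) := by
      have := hx r hrI
      rwa [smul_eq_mul, mul_comm] at this
    have hx0 : x ∈ I ^ (n + 1 - c) := hc (n + 1) (by omega) x hrx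
    -- climb from m₀ := n + 1 - c up to n
    have climb : ∀ j : ℕ, x ∈ I ^ (min (n + 1 - c + j) n) := by
      intro j
      induction j with
      | zero => exact Ideal.pow_le_pow_right (by omega) hx0
      | succ j ih =>
        rcases le_or_gt n (n + 1 - c + j) with h | h
        · have : min (n + 1 - c + (j + 1)) n = n := by omega
          rw [this]
          rwa [min_eq_right h] at ih
        · have hmin : min (n + 1 - c + j) n = n + 1 - c + j := by omega
          rw [hmin] at ih
          set m := n + 1 - c + j with hm
          have hxQ : x ∈ (Submodule.colon (I ^ (m + 2)) I) ⊓ I ^ m := by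
            refine Submodule.mem_inf.mpr ⟨?_, ih⟩
            rw [Submodule.mem_colon]
            intro p hp
            rw [smul_eq_mul]
            have : x * p ∈ I ^ (n + 1) := by
              have := hx p hp
              rwa [smul_eq_mul] at this
            exact Ideal.pow_le_pow_right (by omega) this
          have : x ∈ I ^ (m + 1) := hD m (by omega) hxQ
          have hmin2 : min (n + 1 - c + (j + 1)) n = m + 1 := by omega
          rwa [hmin2]
    have := climb n
    rwa [min_eq_right (by omega)] at this
  · intro x hx
    rw [Submodule.mem_colon]
    intro p hp
    rw [smul_eq_mul]
    have : x * p ∈ I ^ n * I := Ideal.mul_mem_mul hx hp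
    rwa [← pow_succ] at this

/-- Step 4: `(I^(n+j) : I^j) = I^n` for `n` large and every `j`. -/
theorem rr_step4 (hreg : ∃ r ∈ I, r ∈ nonZeroDivisors R) :
    ∃ N : ℕ, 1 ≤ N ∧ ∀ n ≥ N, ∀ j : ℕ, Submodule.colon (I ^ (n + j)) ((I ^ j : Ideal R) : Set R) = I ^ n := by
  obtain ⟨N, hN1, hN⟩ := rr_step3 I hreg
  refine ⟨N, hN1, fun n hn j => ?_⟩
  induction j with
  | zero =>
    apply le_antisymm
    · intro x hx
      rw [Submodule.mem_colon] at hx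
      have := hx 1 (by simp [Ideal.one_eq_top])
      simpa using this
    · intro x hx
      rw [Submodule.mem_colon]
      intro p hp
      rw [smul_eq_mul, add_zero]
      exact Ideal.mul_mem_right p _ hx
  | succ j ih =>
    apply le_antisymm
    · intro x hx
      rw [Submodule.mem_colon] at hx
      have hx' : x ∈ Submodule.colon (I ^ (n + j)) ((I ^ j : Ideal R) : Set R) := by
        rw [Submodule.mem_colon]
        intro a ha
        rw [smul_eq_mul]
        have hcol : x * a ∈ Submodule.colon (I ^ (n + j + 1)) I := by
          rw [Submodule.mem_colon]
          intro p hp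
          rw [smul_eq_mul]
          have hpa : a * p ∈ I ^ (j + 1) := by
            have : a * p ∈ I ^ j * I := Ideal.mul_mem_mul ha hp
            rwa [← pow_succ] at this
          have := hx (a * p) hpa
          rw [smul_eq_mul] at this
          convert this using 1
          ring
          ring
        rw [hN (n + j) (by omega)] at hcol
        exact hcol
      rw [ih] at hx'
      exact hx'
    · intro x hx
      rw [Submodule.mem_colon]
      intro p hp
      rw [smul_eq_mul]
      have : x * p ∈ I ^ n * I ^ (j + 1) := Ideal.mul_mem_mul hx hp
      rwa [← pow_add] at this

end Aux2

/-- If `I` is an ideal containing a regular element in a Noetherian ring `R`, then for all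
sufficiently large `n`, the power `I^n` is Ratliff–Rush closed. -/
theorem ratliffRush_pow_eq_pow {R : Type*} [CommRing R] [IsNoetherianRing R]
    (I : Ideal R) (hreg : ∃ r ∈ I, r ∈ nonZeroDivisors R) :
    ∃ N : ℕ, ∀ n ≥ N, ratliffRushClosure (I ^ n) = I ^ n := by
  obtain ⟨N, hN1, hN⟩ := rr_step4 I hreg
  refine ⟨N, fun n hn => ?_⟩
  have hkey : ∀ k : ℕ, Submodule.colon ((I ^ n) ^ (k + 1)) (((I ^ n) ^ k : Ideal R) : Set R) = I ^ n := by
    intro k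
    have h1 : (I ^ n) ^ (k + 1) = I ^ (n + n * k) := by
      rw [← pow_mul]; ring_nf
    have h2 : (I ^ n) ^ k = I ^ (n * k) := by rw [← pow_mul]
    rw [h1, h2]
    exact hN n hn (n * k)
  rw [ratliffRushClosure]
  simp only [hkey]
  exact ciSup_const
end

section
/- Let I be an ideal containing a regular element in a Noetherian ring R, and let (x_1, ..., x_g) generate a reduction of I (i.e., (x_1,...,x_g)I^n = I^{n+1} for large n). Then the Ratliff-Rush closure of I equals the union over n ≥ 0 of the colon ideals I^{n+1} : (x_1^n, ..., x_g^n). -/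
open Pointwise


lemma prod_mem_pow_card' {R : Type*} [CommRing R] (J : Ideal R) {k : ℕ} (t : Finset (Fin k))
    (y : Fin k → R) (hy : ∀ j, y j ∈ J) : (∏ j ∈ t, y j) ∈ J ^ t.card := by
  classical
  induction t using Finset.induction with
  | empty => simp [Ideal.one_eq_top]
  | insert a s h ih =>
    rw [Finset.prod_insert h, Finset.card_insert_of_notMem h, pow_succ']
    exact Ideal.mul_mem_mul (hy _) ih

lemma pow_le_span_pow_mul {R : Type*} [CommRing R] {g : ℕ} (x : Fin g → R) (n k : ℕ)
    (hk : g * (n - 1) < k) (hn : n ≤ k) :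
    Ideal.span (Set.range x) ^ k ≤
      Ideal.span (Set.range fun i => x i ^ n) * Ideal.span (Set.range x) ^ (k - n) := by
  classical
  rw [show Ideal.span (Set.range x) ^ k = Ideal.span (Set.range x ^ k) from Submodule.span_pow _ k, Ideal.span_le]
  rintro a ha
  rw [Set.mem_pow] at ha
  obtain ⟨f, rfl⟩ := ha
  choose idx hidx using fun j => (f j).2
  have hprod : (List.ofFn fun j => (f j : R)).prod = ∏ j : Fin k, x (idx j) := by
    rw [List.prod_ofFn]
    exact Finset.prod_congr rfl fun j _ => (hidx j).symm
  rw [hprod]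
  obtain ⟨i, hi⟩ := Fintype.exists_lt_card_fiber_of_mul_lt_card (f := idx) (n := n - 1)
    (by simpa using hk)
  set t : Finset (Fin k) := Finset.univ.filter (fun j => idx j = i) with ht
  have hcn : n ≤ t.card := by
    have := hi
    simp only [ht] at this ⊢
    omega
  have hck : t.card ≤ k := by
    simpa using Finset.card_le_univ t
  rw [← Finset.prod_mul_prod_compl t]
  have h1 : (∏ j ∈ t, x (idx j)) = x i ^ t.card := by
    have hji : ∀ j ∈ t, x (idx j) = x i := fun j hj => by
      rw [ht] at hj; rw [(Finset.mem_filter.1 hj).2]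
    rw [Finset.prod_congr rfl hji, Finset.prod_const]
  rw [h1]
  have hxc : x i ^ t.card = x i ^ n * x i ^ (t.card - n) := by
    rw [← pow_add, Nat.add_sub_cancel' hcn]
  rw [hxc, mul_assoc]
  refine Ideal.mul_mem_mul (Ideal.subset_span (Set.mem_range_self i)) ?_
  have h2 : x i ^ (t.card - n) ∈ Ideal.span (Set.range x) ^ (t.card - n) :=
    Ideal.pow_mem_pow (Ideal.subset_span (Set.mem_range_self i)) _
  have h3 : (∏ j ∈ tᶜ, x (idx j)) ∈ Ideal.span (Set.range x) ^ tᶜ.card :=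
    prod_mem_pow_card' _ _ _ fun j => Ideal.subset_span (Set.mem_range_self (idx j))
  have h4 := Ideal.mul_mem_mul h2 h3
  rw [← pow_add] at h4
  have : t.card - n + tᶜ.card = k - n := by
    have : tᶜ.card = k - t.card := by simp [Finset.card_compl]
    omega
  rwa [this] at h4

/-- If `I` is an ideal containing a regular element in a Noetherian ring `R` and
`(x_1, …, x_g)` generates a reduction of `I`, then the Ratliff–Rush closure of `I` is the
union over `n ≥ 0` of the colon ideals `I^{n+1} : (x_1^n, …, x_g^n)`. -/
theorem ratliffRush_eq_iSup_colon_reduction {R : Type*} [CommRing R] [IsNoetherianRing R]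
    (I : Ideal R) (hreg : ∃ r ∈ I, r ∈ nonZeroDivisors R)
    (g : ℕ) (x : Fin g → R) (hx : ∀ i, x i ∈ I)
    (hred : ∃ N : ℕ, ∀ n ≥ N, Ideal.span (Set.range x) * I ^ n = I ^ (n + 1)) :
    ratliffRushClosure I =
      ⨆ n : ℕ, Submodule.colon (I ^ (n + 1)) (Ideal.span (Set.range fun i => x i ^ n)) := by
  classical
  set J := Ideal.span (Set.range x) with hJ
  apply le_antisymm
  · refine iSup_le fun n => le_iSup_of_le n (Submodule.colon_mono le_rfl ?_)
    rw [SetLike.coe_subset_coe, Ideal.span_le]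
    rintro a ⟨i, rfl⟩
    exact Ideal.pow_mem_pow (hx i) n
  · obtain ⟨N, hN⟩ := hred
    have hIpow : ∀ k, I ^ (N + k) = J ^ k * I ^ N := by
      intro k
      induction k with
      | zero => simp
      | succ k ih =>
        have h := hN (N + k) (Nat.le_add_right _ _)
        calc I ^ (N + (k + 1)) = I ^ (N + k + 1) := by ring_nf
          _ = J * I ^ (N + k) := h.symm
          _ = J * (J ^ k * I ^ N) := by rw [ih]
          _ = J ^ (k + 1) * I ^ N := by ring
    refine iSup_le fun n => ?_
    intro r hr
    set K := g * (n - 1) + 1 + n with hK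
    set m := N + K with hm
    have key : Ideal.span {r} * I ^ m ≤ I ^ (m + 1) := by
      have hle := pow_le_span_pow_mul x n K (by omega) (by omega)
      have hrS : Ideal.span {r} * Ideal.span (Set.range fun i => x i ^ n) ≤ I ^ (n + 1) := by
        rw [Ideal.span_singleton_mul_le_iff]
        intro z hz
        simpa [smul_eq_mul] using Submodule.mem_colon.1 hr z hz
      have hJI : J ^ (K - n) ≤ I ^ (K - n) := pow_le_pow_left' (by
        rw [hJ, Ideal.span_le]; rintro a ⟨i, rfl⟩; exact hx i) _
      calc Ideal.span {r} * I ^ m = Ideal.span {r} * (J ^ K * I ^ N) := by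
            rw [hm, hIpow K]
        _ ≤ Ideal.span {r} * (Ideal.span (Set.range fun i => x i ^ n) * J ^ (K - n) * I ^ N) :=
            mul_le_mul_right (mul_le_mul_left hle _) _
        _ = (Ideal.span {r} * Ideal.span (Set.range fun i => x i ^ n)) *
              (J ^ (K - n) * I ^ N) := by ring
        _ ≤ I ^ (n + 1) * (I ^ (K - n) * I ^ N) :=
            mul_le_mul' hrS (mul_le_mul_left hJI _)
        _ = I ^ (n + 1 + (K - n + N)) := by rw [← pow_add, ← pow_add]
        _ = I ^ (m + 1) := by congr 1; omega
    refine Submodule.mem_iSup_of_mem m ?_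
    rw [Submodule.mem_colon]
    intro p hp
    rw [smul_eq_mul]
    exact key (Ideal.mul_mem_mul (Ideal.mem_span_singleton_self r) hp)
end

section
/- Let R be a Noetherian local ring and I, J ideals of R. Then the Ratliff-Rush closure of IJ (the stable value of ((IJ)^{n+1} : (IJ)^n)) equals the union over all r, s ≥ 0 of the colon ideals (I^{r+1}J^{s+1} : I^r J^s). -/
/-- In a Noetherian local ring, the Ratliff–Rush closure of `IJ` equals the union over all
`r, s ≥ 0` of the colon ideals `(I^{r+1} J^{s+1} : I^r J^s)`. -/
theorem ratliffRush_mul_eq_iSup_colon {R : Type*} [CommRing R] [IsNoetherianRing R]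
    [IsLocalRing R] (I J : Ideal R) :
    ratliffRushClosure (I * J) =
      ⨆ p : ℕ × ℕ,
        Submodule.colon (I ^ (p.1 + 1) * J ^ (p.2 + 1)) (I ^ p.1 * J ^ p.2) := by
  unfold ratliffRushClosure
  apply le_antisymm
  · apply iSup_le
    intro n
    refine le_iSup_of_le (n, n) ?_
    rw [mul_pow, mul_pow]
  · apply iSup_le
    rintro ⟨r, s⟩
    refine le_iSup_of_le (r + s) ?_
    intro x hx
    rw [Submodule.mem_colon] at hx ⊢
    intro p hp
    have hp' : p ∈ (I ^ r * J ^ s) * (I ^ s * J ^ r) := by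
      have h : (I * J) ^ (r + s) = (I ^ r * J ^ s) * (I ^ s * J ^ r) := by
        rw [mul_pow, pow_add, pow_add]; ring
      rwa [h] at hp
    refine Submodule.mul_induction_on hp' ?_ ?_
    · intro a ha b hb
      have h1 : x • a ∈ I ^ (r + 1) * J ^ (s + 1) := hx a ha
      have h2 : x • (a * b) = b * (x • a) := by
        simp only [smul_eq_mul]; ring
      have h3 : (I * J) ^ (r + s + 1) = (I ^ s * J ^ r) * (I ^ (r + 1) * J ^ (s + 1)) := by
        rw [mul_pow, pow_succ, pow_succ, pow_add, pow_add, pow_succ, pow_succ]; ring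
      rw [h2, h3]
      exact Ideal.mul_mem_mul hb h1
    · intro y z hy hz
      rw [smul_add]
      exact add_mem hy hz
end

section
/- Let R be a Noetherian local ring and I, J ideals of R, and let a, b be positive integers. Then the Ratliff-Rush closure of I^a J^b equals the union over k ≥ 0 of the colon ideals (I^{a+k} J^{b+k} : I^k J^k). -/
lemma colon_mul_mul_le {R : Type*} [CommRing R] (A B C : Ideal R) :
    Submodule.colon A B ≤ Submodule.colon (C * A) (C * B) := by
  intro x hx
  rw [Submodule.mem_colon] at hx ⊢
  intro p hp
  refine Submodule.mul_induction_on hp ?_ ?_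
  · intro c hc bb hb
    have h := hx bb hb
    have : x • (c * bb) = c * (x • bb) := by
      simp [smul_eq_mul]; ring
    rw [this]
    exact Ideal.mul_mem_mul hc h
  · intro y z hy hz
    simpa [smul_add, mul_add] using Submodule.add_mem _ hy hz

/-- In a Noetherian local ring, for positive integers `a, b`, the Ratliff–Rush closure of
`I^a J^b` equals the union over `k ≥ 0` of the colon ideals `(I^{a+k} J^{b+k} : I^k J^k)`. -/
theorem ratliffRush_pow_mul_eq_iSup_colon {R : Type*} [CommRing R] [IsNoetherianRing R]
    [IsLocalRing R] (I J : Ideal R) (a b : ℕ) (ha : 1 ≤ a) (hb : 1 ≤ b) :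
    ratliffRushClosure (I ^ a * J ^ b) =
      ⨆ k : ℕ, Submodule.colon (I ^ (a + k) * J ^ (b + k)) (I ^ k * J ^ k) := by
  obtain ⟨a', rfl⟩ : ∃ a', a = a' + 1 := ⟨a - 1, (Nat.succ_pred_eq_of_pos ha).symm⟩
  obtain ⟨b', rfl⟩ : ∃ b', b = b' + 1 := ⟨b - 1, (Nat.succ_pred_eq_of_pos hb).symm⟩
  unfold ratliffRushClosure
  apply le_antisymm
  · refine iSup_le fun n => le_trans ?_ (le_iSup _ ((a' + 1 + (b' + 1)) * n))
    have h := colon_mul_mul_le ((I ^ (a' + 1) * J ^ (b' + 1)) ^ (n + 1))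
      ((I ^ (a' + 1) * J ^ (b' + 1)) ^ n) (I ^ ((b' + 1) * n) * J ^ ((a' + 1) * n))
    have e1 : I ^ (a' + 1 + (a' + 1 + (b' + 1)) * n) * J ^ (b' + 1 + (a' + 1 + (b' + 1)) * n)
        = (I ^ ((b' + 1) * n) * J ^ ((a' + 1) * n)) * ((I ^ (a' + 1) * J ^ (b' + 1)) ^ (n + 1)) := by
      ring
    have e2 : I ^ ((a' + 1 + (b' + 1)) * n) * J ^ ((a' + 1 + (b' + 1)) * n)
        = (I ^ ((b' + 1) * n) * J ^ ((a' + 1) * n)) * ((I ^ (a' + 1) * J ^ (b' + 1)) ^ n) := by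
      ring
    rw [e1, e2]
    exact h
  · refine iSup_le fun k => le_trans ?_ (le_iSup _ k)
    have h := colon_mul_mul_le (I ^ (a' + 1 + k) * J ^ (b' + 1 + k))
      (I ^ k * J ^ k) (I ^ (a' * k) * J ^ (b' * k))
    have e1 : (I ^ (a' + 1) * J ^ (b' + 1)) ^ (k + 1)
        = (I ^ (a' * k) * J ^ (b' * k)) * (I ^ (a' + 1 + k) * J ^ (b' + 1 + k)) := by
      ring
    have e2 : (I ^ (a' + 1) * J ^ (b' + 1)) ^ k
        = (I ^ (a' * k) * J ^ (b' * k)) * (I ^ k * J ^ k) := by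
      ring
    rw [e1, e2]
    exact h
end

section
/- Let (R, m) be a d-dimensional Noetherian local ring with m-primary ideals I, J, and let z_1, ..., z_d ∈ IJ generate a reduction of IJ arising from a complete reduction of (I, J). Then for all a, b ≥ 1, the Ratliff-Rush closure of I^a J^b equals the union over k ≥ 0 of (I^{a+k} J^{b+k} : (z_1^k, ..., z_d^k)). -/
open IsLocalRing

section Aux
variable {R : Type*} [CommRing R]

lemma aux_prod_mem_pow_card {ι : Type*} [DecidableEq ι] (P : Ideal R) (h : ι → R)
    (s : Finset ι) (H : ∀ j ∈ s, h j ∈ P) : (∏ j ∈ s, h j) ∈ P ^ s.card := by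
  induction s using Finset.induction_on with
  | empty => simp [Ideal.one_eq_top]
  | @insert a s ha ih =>
    rw [Finset.prod_insert ha, Finset.card_insert_of_notMem ha, pow_succ,
      mul_comm (P ^ s.card) P]
    exact Ideal.mul_mem_mul (H a (Finset.mem_insert_self a s))
      (ih fun j hj => H j (Finset.mem_insert_of_mem hj))

lemma aux_pigeonhole {d : ℕ} (z : Fin d → R) (P : Ideal R) (hz : ∀ i, z i ∈ P) (k : ℕ) :
    Ideal.span (Set.range z) ^ (d * k + k + 1) ≤
      Ideal.span (Set.range fun i => z i ^ k) * P ^ (d * k + 1) := by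
  classical
  rw [Ideal.span, Submodule.span_pow, ← Ideal.span, Ideal.span_le]
  rintro r hr
  rw [Set.mem_pow] at hr
  obtain ⟨f, hf⟩ := hr
  choose g hg using fun j => (f j).2
  have hr' : r = ∏ j : Fin (d * k + k + 1), z (g j) := by
    rw [← hf, List.prod_ofFn]
    exact (Finset.prod_congr rfl fun j _ => (hg j).symm)
  obtain ⟨i, -, hi⟩ := Finset.exists_lt_card_fiber_of_mul_lt_card_of_maps_to
    (f := g) (s := Finset.univ) (t := Finset.univ) (n := k)
    (fun j _ => Finset.mem_univ _) (by simp)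
  set S := Finset.univ.filter (fun j => g j = i) with hS
  set T := Finset.univ.filter (fun j => ¬ g j = i) with hT
  have hc1 : k < S.card := hi
  have hc2 : S.card + T.card = d * k + k + 1 := by
    rw [hS, hT, Finset.card_filter_add_card_filter_not]; simp
  have hsplit : r = z i ^ k * (z i ^ (S.card - k) * ∏ j ∈ T, z (g j)) := by
    rw [hr', ← Finset.prod_filter_mul_prod_filter_not Finset.univ (fun j => g j = i), ← hS, ← hT]
    have h1 : (∏ j ∈ S, z (g j)) = z i ^ S.card := by
      rw [Finset.prod_congr rfl (fun j hj => by rw [(Finset.mem_filter.1 hj).2]),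
        Finset.prod_const]
    rw [h1, ← mul_assoc, ← pow_add, Nat.add_sub_cancel' (le_of_lt hc1)]
  rw [hsplit]
  refine Ideal.mul_mem_mul (Ideal.subset_span ⟨i, rfl⟩) ?_
  have hm := Ideal.mul_mem_mul (Ideal.pow_mem_pow (hz i) (S.card - k))
    (aux_prod_mem_pow_card P _ T (fun j _ => hz (g j)))
  rw [← pow_add] at hm
  have he : S.card - k + T.card = d * k + 1 := by omega
  rwa [he] at hm

lemma aux_red_pow (Z P : Ideal R) (N : ℕ) (h : ∀ n ≥ N, Z * P ^ n = P ^ (n + 1)) :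
    ∀ t : ℕ, P ^ (N + t) = Z ^ t * P ^ N := by
  intro t
  induction t with
  | zero => simp
  | succ t ih =>
    have h' := h (N + t) (Nat.le_add_right _ _)
    calc P ^ (N + (t + 1)) = Z * P ^ (N + t) := by rw [show N + (t+1) = (N+t)+1 by omega, ← h']
    _ = Z * (Z ^ t * P ^ N) := by rw [ih]
    _ = Z ^ (t + 1) * P ^ N := by ring

end Aux

/-- Let `(R, m)` be a `d`-dimensional Noetherian local ring with infinite residue field and
`m`-primary ideals `I, J`, and let `z_i = x_i y_i` (with `x_i ∈ I`, `y_i ∈ J`) generate a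
reduction of `IJ`, i.e. `(z_1, …, z_d)` arises from a complete reduction of `(I, J)`.
Then for all `a, b ≥ 1`, the Ratliff–Rush closure of `I^a J^b` equals the union over `k ≥ 0`
of `(I^{a+k} J^{b+k} : (z_1^k, …, z_d^k))`. -/
theorem ratliffRush_eq_iSup_colon_completeReduction {R : Type*} [CommRing R]
    [IsNoetherianRing R] [IsLocalRing R] [Infinite (ResidueField R)]
    (d : ℕ) (hdim : ringKrullDim R = d)
    (I J : Ideal R) (hI : I.radical = maximalIdeal R) (hJ : J.radical = maximalIdeal R)
    (x y : Fin d → R) (hx : ∀ i, x i ∈ I) (hy : ∀ i, y i ∈ J)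
    (hred : ∃ N : ℕ, ∀ n ≥ N,
      Ideal.span (Set.range fun i => x i * y i) * (I * J) ^ n = (I * J) ^ (n + 1)) :
    ∀ a b : ℕ, 1 ≤ a → 1 ≤ b →
      ratliffRushClosure (I ^ a * J ^ b) =
        ⨆ k : ℕ, Submodule.colon (I ^ (a + k) * J ^ (b + k))
          (Ideal.span (Set.range fun i => (x i * y i) ^ k)) := by
  classical
  obtain ⟨N, hN⟩ := hred
  intro a b ha hb
  obtain ⟨a', rfl⟩ : ∃ a', a = a' + 1 := ⟨a - 1, by omega⟩
  obtain ⟨b', rfl⟩ : ∃ b', b = b' + 1 := ⟨b - 1, by omega⟩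
  rw [ratliffRushClosure]
  apply le_antisymm
  · refine iSup_le fun n => ?_
    intro u hu
    have hu' : Ideal.span {u} * (I ^ (a' + 1) * J ^ (b' + 1)) ^ n
        ≤ (I ^ (a' + 1) * J ^ (b' + 1)) ^ (n + 1) := by
      rw [Ideal.span_singleton_mul_le_iff]
      intro v hv
      simpa using Submodule.mem_colon.mp hu v hv
    refine Submodule.mem_iSup_of_mem ((a' + 1) * n + (b' + 1) * n) ?_
    rw [Submodule.mem_colon', SetLike.coe_subset_coe, Ideal.span_le]
    rintro _ ⟨i, rfl⟩
    simp only [Set.mem_setOf_eq, SetLike.mem_coe, Submodule.mem_comap, LinearMap.smul_apply,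
      LinearMap.id_apply, smul_eq_mul]
    have e1 : x i ^ ((a' + 1) * n) * y i ^ ((b' + 1) * n)
        ∈ (I ^ (a' + 1) * J ^ (b' + 1)) ^ n := by
      rw [mul_pow, ← pow_mul, ← pow_mul]
      exact Ideal.mul_mem_mul (Ideal.pow_mem_pow (hx i) _) (Ideal.pow_mem_pow (hy i) _)
    have e2 : u * (x i ^ ((a' + 1) * n) * y i ^ ((b' + 1) * n))
        ∈ (I ^ (a' + 1) * J ^ (b' + 1)) ^ (n + 1) :=
      hu' (Ideal.mul_mem_mul (Ideal.mem_span_singleton_self u) e1)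
    have e3 : x i ^ ((b' + 1) * n) * y i ^ ((a' + 1) * n)
        ∈ I ^ ((b' + 1) * n) * J ^ ((a' + 1) * n) :=
      Ideal.mul_mem_mul (Ideal.pow_mem_pow (hx i) _) (Ideal.pow_mem_pow (hy i) _)
    have e4 := Ideal.mul_mem_mul e2 e3
    have eid : (I ^ (a' + 1) * J ^ (b' + 1)) ^ (n + 1) * (I ^ ((b' + 1) * n) * J ^ ((a' + 1) * n))
        = I ^ ((a' + 1) + ((a' + 1) * n + (b' + 1) * n))
          * J ^ ((b' + 1) + ((a' + 1) * n + (b' + 1) * n)) := by ring_nf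
    rw [eid] at e4
    have eelt : u * (x i * y i) ^ ((a' + 1) * n + (b' + 1) * n)
        = (u * (x i ^ ((a' + 1) * n) * y i ^ ((b' + 1) * n)))
          * (x i ^ ((b' + 1) * n) * y i ^ ((a' + 1) * n)) := by ring_nf
    rw [eelt]
    exact e4
  · refine iSup_le fun k => ?_
    intro u hu
    have huZ : Ideal.span {u} * Ideal.span (Set.range fun i => (x i * y i) ^ k)
        ≤ I ^ ((a' + 1) + k) * J ^ ((b' + 1) + k) := by
      rw [Ideal.span_singleton_mul_le_iff]
      intro v hv
      simpa using Submodule.mem_colon.mp hu v hv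
    have hzP : ∀ i, x i * y i ∈ I * J := fun i => Ideal.mul_mem_mul (hx i) (hy i)
    have hpig := aux_pigeonhole (fun i => x i * y i) (I * J) hzP k
    have hrp := aux_red_pow (Ideal.span (Set.range fun i => x i * y i)) (I * J) N hN
      (d * k + k + 1)
    refine Submodule.mem_iSup_of_mem (N + (d * k + k + 1)) ?_
    rw [Submodule.mem_colon]
    intro p hp
    have key : Ideal.span {u} * (I ^ (a' + 1) * J ^ (b' + 1)) ^ (N + (d * k + k + 1))
        ≤ (I ^ (a' + 1) * J ^ (b' + 1)) ^ (N + (d * k + k + 1) + 1) := by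
      have expand : (I ^ (a' + 1) * J ^ (b' + 1)) ^ (N + (d * k + k + 1))
          = (I * J) ^ (N + (d * k + k + 1))
            * (I ^ (a' * (N + (d * k + k + 1))) * J ^ (b' * (N + (d * k + k + 1)))) := by
        ring_nf
      calc Ideal.span {u} * (I ^ (a' + 1) * J ^ (b' + 1)) ^ (N + (d * k + k + 1))
          = (Ideal.span {u} * (Ideal.span (Set.range fun i => x i * y i)) ^ (d * k + k + 1))
            * ((I * J) ^ N
              * (I ^ (a' * (N + (d * k + k + 1))) * J ^ (b' * (N + (d * k + k + 1))))) := by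
            rw [expand, hrp]; ring_nf
        _ ≤ (Ideal.span {u}
              * (Ideal.span (Set.range fun i => (x i * y i) ^ k) * (I * J) ^ (d * k + 1)))
            * ((I * J) ^ N
              * (I ^ (a' * (N + (d * k + k + 1))) * J ^ (b' * (N + (d * k + k + 1))))) :=
            Ideal.mul_mono_left (Ideal.mul_mono_right hpig)
        _ = (Ideal.span {u} * Ideal.span (Set.range fun i => (x i * y i) ^ k))
            * ((I * J) ^ (d * k + 1) * (I * J) ^ N
              * (I ^ (a' * (N + (d * k + k + 1))) * J ^ (b' * (N + (d * k + k + 1))))) := by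
            ring
        _ ≤ (I ^ ((a' + 1) + k) * J ^ ((b' + 1) + k))
            * ((I * J) ^ (d * k + 1) * (I * J) ^ N
              * (I ^ (a' * (N + (d * k + k + 1))) * J ^ (b' * (N + (d * k + k + 1))))) :=
            Ideal.mul_mono_left huZ
        _ = (I ^ (a' + 1) * J ^ (b' + 1)) ^ (N + (d * k + k + 1) + 1) := by ring_nf
    have := key (Ideal.mul_mem_mul (Ideal.mem_span_singleton_self u) hp)
    simpa using this
end

section
/- Let (R, m) be a 2-dimensional local ring with m-primary ideals I, J, and let (x, y; z, w) be a complete reduction of (I, J) (so x, y ∈ I, z, w ∈ J and (xz, yw) is a reduction of IJ). Then (x, w) and (y, z) are both joint reductions of (I, J); that is, xJ + wI and yJ + zI are reductions of IJ. -/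
open IsLocalRing

lemma squeeze_reduction {R : Type*} [CommRing R] (I J K : Ideal R) (a b : R)
    (hK1 : Ideal.span {a, b} ≤ K) (hK2 : K ≤ I * J)
    (hcr : ∃ N : ℕ, ∀ n ≥ N, Ideal.span {a, b} * (I * J) ^ n = (I * J) ^ (n + 1)) :
    ∃ N : ℕ, ∀ n ≥ N, K * (I * J) ^ n = (I * J) ^ (n + 1) := by
  obtain ⟨N, hN⟩ := hcr
  refine ⟨N, fun n hn => le_antisymm ?_ ?_⟩
  · calc K * (I * J) ^ n ≤ (I * J) * (I * J) ^ n := Ideal.mul_mono_left hK2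
      _ = (I * J) ^ (n + 1) := (pow_succ' _ _).symm
  · rw [← hN n hn]; exact Ideal.mul_mono_left hK1

/-- Let `(R, m)` be a 2-dimensional Noetherian local ring with infinite residue field and
`m`-primary ideals `I, J`, and let `(x, y; z, w)` be a complete reduction of `(I, J)`
(so `x, y ∈ I`, `z, w ∈ J` and `(xz, yw)` is a reduction of `IJ`).  Then `(x, w)` and
`(y, z)` are both joint reductions of `(I, J)`: `xJ + wI` and `yJ + zI` are reductions
of `IJ`. -/
theorem jointReductions_of_completeReduction {R : Type*} [CommRing R]
    [IsNoetherianRing R] [IsLocalRing R] [Infinite (ResidueField R)]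
    (hdim : ringKrullDim R = 2)
    (I J : Ideal R) (hI : I.radical = maximalIdeal R) (hJ : J.radical = maximalIdeal R)
    (x y z w : R) (hx : x ∈ I) (hy : y ∈ I) (hz : z ∈ J) (hw : w ∈ J)
    (hcr : ∃ N : ℕ, ∀ n ≥ N,
      Ideal.span {x * z, y * w} * (I * J) ^ n = (I * J) ^ (n + 1)) :
    (∃ N : ℕ, ∀ n ≥ N,
        (Ideal.span {x} * J + Ideal.span {w} * I) * (I * J) ^ n = (I * J) ^ (n + 1)) ∧
      (∃ N : ℕ, ∀ n ≥ N,
        (Ideal.span {y} * J + Ideal.span {z} * I) * (I * J) ^ n = (I * J) ^ (n + 1)) := by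
  have hxz : x * z ∈ Ideal.span {x} * J :=
    Ideal.mul_mem_mul (Ideal.mem_span_singleton_self x) hz
  have hyw : y * w ∈ Ideal.span {w} * I := by
    rw [mul_comm y w]; exact Ideal.mul_mem_mul (Ideal.mem_span_singleton_self w) hy
  have hxz' : x * z ∈ Ideal.span {z} * I := by
    rw [mul_comm x z]; exact Ideal.mul_mem_mul (Ideal.mem_span_singleton_self z) hx
  have hyw' : y * w ∈ Ideal.span {y} * J :=
    Ideal.mul_mem_mul (Ideal.mem_span_singleton_self y) hw
  have hspan1 : Ideal.span {x * z, y * w} ≤ Ideal.span {x} * J + Ideal.span {w} * I := by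
    rw [Ideal.span_le]
    rintro r (rfl | rfl)
    · exact Ideal.mem_sup_left hxz
    · exact Ideal.mem_sup_right hyw
  have hspan2 : Ideal.span {x * z, y * w} ≤ Ideal.span {y} * J + Ideal.span {z} * I := by
    rw [Ideal.span_le]
    rintro r (rfl | rfl)
    · exact Ideal.mem_sup_right hxz'
    · exact Ideal.mem_sup_left hyw'
  have hle1 : Ideal.span {x} * J + Ideal.span {w} * I ≤ I * J := by
    apply sup_le
    · exact Ideal.mul_mono_left (by rwa [Ideal.span_le, Set.singleton_subset_iff])
    · rw [mul_comm I J]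
      exact Ideal.mul_mono_left (by rwa [Ideal.span_le, Set.singleton_subset_iff])
  have hle2 : Ideal.span {y} * J + Ideal.span {z} * I ≤ I * J := by
    apply sup_le
    · exact Ideal.mul_mono_left (by rwa [Ideal.span_le, Set.singleton_subset_iff])
    · rw [mul_comm I J]
      exact Ideal.mul_mono_left (by rwa [Ideal.span_le, Set.singleton_subset_iff])
  exact ⟨squeeze_reduction I J _ _ _ hspan1 hle1 hcr,
    squeeze_reduction I J _ _ _ hspan2 hle2 hcr⟩
end

section
/- Let R = k[[X,Y,Z]]/(X², XY) with maximal ideal m and let y, z denote the images of Y, Z in R. Then (y^{2k}, z^{2k}) m^{2k} = m^{4k} for all k ≥ 1; that is, (y^{2k}, z^{2k}) is a reduction of m^{2k} with reduction number at most 1 in the sense that it absorbs m^{2k} into m^{4k}. -/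
set_option maxHeartbeats 1000000
set_option synthInstance.maxHeartbeats 400000

section Aux

variable {A : Type*} [CommRing A]

lemma ideal_add_le_add {P Q P' Q' : Ideal A} (h1 : P ≤ P') (h2 : Q ≤ Q') :
    P + Q ≤ P' + Q' := by
  rw [Submodule.add_eq_sup, Submodule.add_eq_sup]
  exact sup_le_sup h1 h2

lemma ideal_le_add_left {P Q : Ideal A} : P ≤ P + Q := by
  rw [Submodule.add_eq_sup]; exact le_sup_left

lemma ideal_le_add_right {P Q : Ideal A} : Q ≤ P + Q := by
  rw [Submodule.add_eq_sup]; exact le_sup_right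

/-- Binomial-type inequality for ideals. -/
lemma ideal_binom (Y Z : Ideal A) :
    ∀ a b : ℕ, (Y + Z) ^ (a + b) ≤ Y ^ a * (Y + Z) ^ b + Z ^ b * (Y + Z) ^ a := by
  intro a
  induction a with
  | zero =>
    intro b
    simpa using ideal_le_add_left
  | succ a ih =>
    intro b
    induction b with
    | zero =>
      simpa using ideal_le_add_right
    | succ b ihb =>
      have h1 : (Y + Z) ^ (a + 1 + (b + 1)) = Y * (Y + Z) ^ (a + (b + 1)) + Z * (Y + Z) ^ (a + 1 + b) := by
        have e1 : a + 1 + (b + 1) = (a + (b + 1)) + 1 := by ring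
        have e2 : a + (b + 1) = a + 1 + b := by ring
        rw [e1, pow_succ, mul_add, mul_comm ((Y+Z)^(a+(b+1))) Y, mul_comm ((Y+Z)^(a+(b+1))) Z, e2]
      rw [h1]
      have step1 : Y * (Y + Z) ^ (a + (b + 1)) ≤ Y ^ (a + 1) * (Y + Z) ^ (b + 1) + Z ^ (b + 1) * (Y + Z) ^ (a + 1) := by
        calc Y * (Y + Z) ^ (a + (b + 1))
            ≤ Y * (Y ^ a * (Y + Z) ^ (b + 1) + Z ^ (b + 1) * (Y + Z) ^ a) :=
              Ideal.mul_mono_right (ih (b + 1))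
          _ = Y ^ (a + 1) * (Y + Z) ^ (b + 1) + Z ^ (b + 1) * (Y * (Y + Z) ^ a) := by ring
          _ ≤ Y ^ (a + 1) * (Y + Z) ^ (b + 1) + Z ^ (b + 1) * (Y + Z) ^ (a + 1) := by
              refine ideal_add_le_add le_rfl (Ideal.mul_mono_right ?_)
              calc Y * (Y + Z) ^ a ≤ (Y + Z) * (Y + Z) ^ a :=
                    Ideal.mul_mono_left ideal_le_add_left
                _ = (Y + Z) ^ (a + 1) := by ring
      have step2 : Z * (Y + Z) ^ (a + 1 + b) ≤ Y ^ (a + 1) * (Y + Z) ^ (b + 1) + Z ^ (b + 1) * (Y + Z) ^ (a + 1) := by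
        calc Z * (Y + Z) ^ (a + 1 + b)
            ≤ Z * (Y ^ (a + 1) * (Y + Z) ^ b + Z ^ b * (Y + Z) ^ (a + 1)) :=
              Ideal.mul_mono_right ihb
          _ = Y ^ (a + 1) * (Z * (Y + Z) ^ b) + Z ^ (b + 1) * (Y + Z) ^ (a + 1) := by ring
          _ ≤ Y ^ (a + 1) * (Y + Z) ^ (b + 1) + Z ^ (b + 1) * (Y + Z) ^ (a + 1) := by
              refine ideal_add_le_add (Ideal.mul_mono_right ?_) le_rfl
              calc Z * (Y + Z) ^ b ≤ (Y + Z) * (Y + Z) ^ b :=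
                    Ideal.mul_mono_left ideal_le_add_right
                _ = (Y + Z) ^ (b + 1) := by ring
      calc Y * (Y + Z) ^ (a + (b + 1)) + Z * (Y + Z) ^ (a + 1 + b)
          ≤ (Y ^ (a + 1) * (Y + Z) ^ (b + 1) + Z ^ (b + 1) * (Y + Z) ^ (a + 1)) +
            (Y ^ (a + 1) * (Y + Z) ^ (b + 1) + Z ^ (b + 1) * (Y + Z) ^ (a + 1)) :=
            ideal_add_le_add step1 step2
        _ = Y ^ (a + 1) * (Y + Z) ^ (b + 1) + Z ^ (b + 1) * (Y + Z) ^ (a + 1) := by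
            rw [Submodule.add_eq_sup, sup_idem]

lemma ideal_add_le {P Q S : Ideal A} (h1 : P ≤ S) (h2 : Q ≤ S) : P + Q ≤ S := by
  rw [Submodule.add_eq_sup]; exact sup_le h1 h2

end Aux

/-- The ring `R = k[[X,Y,Z]]/(X², XY)`. -/
abbrev ExampleRing (k : Type*) [Field k] : Type _ :=
  MvPowerSeries (Fin 3) k ⧸
    (Ideal.span {(MvPowerSeries.X 0 : MvPowerSeries (Fin 3) k) ^ 2,
      (MvPowerSeries.X 0 : MvPowerSeries (Fin 3) k) * MvPowerSeries.X 1})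

/-- The image of `X i` in `R = k[[X,Y,Z]]/(X², XY)`. -/
noncomputable def exVar (k : Type*) [Field k] (i : Fin 3) : ExampleRing k :=
  Ideal.Quotient.mk _ (MvPowerSeries.X i)

/-- The maximal ideal `m = (x, y, z)` of `R = k[[X,Y,Z]]/(X², XY)`. -/
noncomputable def exMaxIdeal (k : Type*) [Field k] : Ideal (ExampleRing k) :=
  Ideal.span {exVar k 0, exVar k 1, exVar k 2}


section ExRing

variable (k : Type*) [Field k]

lemma ex_xx : exVar k 0 * exVar k 0 = 0 := by
  rw [exVar, ← map_mul, Ideal.Quotient.eq_zero_iff_mem]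
  exact Ideal.subset_span (by rw [← sq]; exact Set.mem_insert _ _)

lemma ex_xy : exVar k 0 * exVar k 1 = 0 := by
  rw [exVar, exVar, ← map_mul, Ideal.Quotient.eq_zero_iff_mem]
  exact Ideal.subset_span (Set.mem_insert_of_mem _ rfl)

lemma ex_m_eq : exMaxIdeal k =
    Ideal.span {exVar k 0} + (Ideal.span {exVar k 1} + Ideal.span {exVar k 2}) := by
  have h : ({exVar k 0, exVar k 1, exVar k 2} : Set (ExampleRing k)) =
      {exVar k 0} ∪ ({exVar k 1} ∪ {exVar k 2}) := by
    rw [Set.insert_eq, Set.insert_eq]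
  rw [exMaxIdeal, h, Ideal.span_union, Ideal.span_union, Submodule.add_eq_sup,
    Submodule.add_eq_sup]

lemma ex_II : Ideal.span {exVar k 0} * Ideal.span {exVar k 0} = ⊥ := by
  rw [Ideal.span_singleton_mul_span_singleton]
  exact Ideal.span_singleton_eq_bot.mpr (ex_xx k)

lemma ex_YI : Ideal.span {exVar k 1} * Ideal.span {exVar k 0} = ⊥ := by
  rw [Ideal.span_singleton_mul_span_singleton]
  exact Ideal.span_singleton_eq_bot.mpr (by rw [mul_comm]; exact ex_xy k)

lemma ex_mI : exMaxIdeal k * Ideal.span {exVar k 0} =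
    Ideal.span {exVar k 2} * Ideal.span {exVar k 0} := by
  set I := Ideal.span {exVar k 0}
  set Y := Ideal.span {exVar k 1}
  set Z := Ideal.span {exVar k 2}
  have h : (I + (Y + Z)) * I = I * I + (Y * I + Z * I) := by ring
  rw [ex_m_eq, h, ex_II, ex_YI, Submodule.add_eq_sup, Submodule.add_eq_sup,
    bot_sup_eq, bot_sup_eq]

lemma ex_pow_mI : ∀ n : ℕ, exMaxIdeal k ^ n * Ideal.span {exVar k 0} =
    Ideal.span {exVar k 2} ^ n * Ideal.span {exVar k 0} := by
  intro n
  induction n with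
  | zero => ring
  | succ n ih =>
    set I := Ideal.span {exVar k 0}
    set Z := Ideal.span {exVar k 2}
    set m := exMaxIdeal k with hm
    calc m ^ (n + 1) * I = m ^ n * (m * I) := by ring
      _ = m ^ n * (Z * I) := by rw [hm, ex_mI]
      _ = m ^ n * I * Z := by ring
      _ = Z ^ n * I * Z := by rw [ih]
      _ = Z ^ (n + 1) * I := by ring

lemma ex_step3 : ∀ n : ℕ, exMaxIdeal k ^ (n + 1) ≤
    (Ideal.span {exVar k 1} + Ideal.span {exVar k 2}) ^ (n + 1) +
      Ideal.span {exVar k 2} ^ n * Ideal.span {exVar k 0} := by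
  intro n
  induction n with
  | zero =>
    rw [show ∀ J : Ideal (ExampleRing k), J ^ (0 + 1) = J from fun J => by ring,
      show ∀ J : Ideal (ExampleRing k), J ^ (0 + 1) = J from fun J => by ring,
      show Ideal.span {exVar k 2} ^ 0 * Ideal.span {exVar k 0} = Ideal.span {exVar k 0} by ring,
      ex_m_eq]
    exact le_of_eq (add_comm _ _)
  | succ n ih =>
    set I := Ideal.span {exVar k 0}
    set Y := Ideal.span {exVar k 1}
    set Z := Ideal.span {exVar k 2}
    set m := exMaxIdeal k with hm
    have hYZm : Y + Z ≤ m := by rw [hm, ex_m_eq]; exact ideal_le_add_right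
    have key : m ^ (n + 1 + 1) ≤ ((Y + Z) ^ (n + 1) * I + (Y + Z) ^ (n + 2)) + Z ^ (n + 1) * I := by
      calc m ^ (n + 1 + 1) = m ^ (n + 1) * m := by ring
        _ ≤ ((Y + Z) ^ (n + 1) + Z ^ n * I) * m := Ideal.mul_mono_left ih
        _ = (Y + Z) ^ (n + 1) * m + Z ^ n * (m * I) := by ring
        _ = (Y + Z) ^ (n + 1) * m + Z ^ (n + 1) * I := by rw [hm, ex_mI]; ring
        _ = ((Y + Z) ^ (n + 1) * I + (Y + Z) ^ (n + 2)) + Z ^ (n + 1) * I := by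
            rw [hm, ex_m_eq]; ring
    refine le_trans key ?_
    have h1 : (Y + Z) ^ (n + 1) * I ≤ Z ^ (n + 1) * I := by
      calc (Y + Z) ^ (n + 1) * I ≤ m ^ (n + 1) * I :=
            Ideal.mul_mono_left (Ideal.pow_right_mono hYZm _)
        _ = Z ^ (n + 1) * I := by rw [hm]; exact ex_pow_mI k (n + 1)
    exact ideal_add_le
      (ideal_add_le (le_trans h1 ideal_le_add_right) ideal_le_add_left)
      ideal_le_add_right

end ExRing


/-- In `R = k[[X,Y,Z]]/(X², XY)` with maximal ideal `m` and `y, z` the images of `Y, Z`,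
one has `(y^{2k}, z^{2k}) m^{2k} = m^{4k}` for all `k ≥ 1`; in particular `(y^{2k}, z^{2k})`
is a reduction of `m^{2k}` absorbing `m^{2k}` into `m^{4k}` in one step. -/
theorem span_pow_mul_eq_pow_example (k : Type*) [Field k] :
    ∀ K : ℕ, 1 ≤ K →
      Ideal.span {exVar k 1 ^ (2 * K), exVar k 2 ^ (2 * K)} * exMaxIdeal k ^ (2 * K) =
        exMaxIdeal k ^ (4 * K) := by
  intro K hK
  obtain ⟨n, hn⟩ : ∃ n, 2 * K = n + 1 := ⟨2 * K - 1, by omega⟩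
  set I := Ideal.span {exVar k 0}
  set Y := Ideal.span {exVar k 1}
  set Z := Ideal.span {exVar k 2}
  set m := exMaxIdeal k with hm
  have hYm : Y ≤ m := by
    rw [hm, ex_m_eq]; exact le_trans ideal_le_add_left ideal_le_add_right
  have hZm : Z ≤ m := by
    rw [hm, ex_m_eq]; exact le_trans ideal_le_add_right ideal_le_add_right
  have hIm : I ≤ m := by rw [hm, ex_m_eq]; exact ideal_le_add_left
  have hset : ({exVar k 1 ^ (2 * K), exVar k 2 ^ (2 * K)} : Set (ExampleRing k)) =
      {exVar k 1 ^ (2 * K)} ∪ {exVar k 2 ^ (2 * K)} := Set.insert_eq _ _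
  have hspan : Ideal.span {exVar k 1 ^ (2 * K), exVar k 2 ^ (2 * K)} =
      Y ^ (2 * K) + Z ^ (2 * K) := by
    rw [hset, Ideal.span_union, ← Ideal.span_singleton_pow, ← Ideal.span_singleton_pow,
      Submodule.add_eq_sup]
  have hpow : m ^ (4 * K) = m ^ (2 * K) * m ^ (2 * K) := by
    rw [show 4 * K = 2 * K + 2 * K by omega]; ring
  rw [hspan, hpow]
  have hYZm2 : Y ^ (2 * K) + Z ^ (2 * K) ≤ m ^ (2 * K) :=
    ideal_add_le (Ideal.pow_right_mono hYm _) (Ideal.pow_right_mono hZm _)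
  apply le_antisymm
  · exact Ideal.mul_mono_left hYZm2
  · have h2 : 2 * K + 2 * K = (2 * K + n) + 1 := by omega
    have hstep := ex_step3 k (2 * K + n)
    rw [← h2] at hstep
    have hb : (Y + Z) ^ (2 * K + 2 * K) ≤ (Y ^ (2 * K) + Z ^ (2 * K)) * m ^ (2 * K) := by
      calc (Y + Z) ^ (2 * K + 2 * K)
          ≤ Y ^ (2 * K) * (Y + Z) ^ (2 * K) + Z ^ (2 * K) * (Y + Z) ^ (2 * K) :=
            ideal_binom Y Z (2 * K) (2 * K)
        _ = (Y ^ (2 * K) + Z ^ (2 * K)) * (Y + Z) ^ (2 * K) := by ring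
        _ ≤ (Y ^ (2 * K) + Z ^ (2 * K)) * m ^ (2 * K) :=
            Ideal.mul_mono_right (Ideal.pow_right_mono (ideal_add_le hYm hZm) _)
    have hc : Z ^ (2 * K + n) * I ≤ (Y ^ (2 * K) + Z ^ (2 * K)) * m ^ (2 * K) := by
      calc Z ^ (2 * K + n) * I = Z ^ (2 * K) * (Z ^ n * I) := by ring
        _ ≤ (Y ^ (2 * K) + Z ^ (2 * K)) * m ^ (2 * K) := by
            refine Ideal.mul_mono ideal_le_add_right ?_
            calc Z ^ n * I ≤ m ^ n * m := Ideal.mul_mono (Ideal.pow_right_mono hZm _) hIm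
              _ = m ^ (n + 1) := (pow_succ m n).symm
              _ = m ^ (2 * K) := by rw [hn]
    calc m ^ (2 * K) * m ^ (2 * K) = m ^ (2 * K + 2 * K) := by ring
      _ ≤ (Y + Z) ^ (2 * K + 2 * K) + Z ^ (2 * K + n) * I := hstep
      _ ≤ (Y ^ (2 * K) + Z ^ (2 * K)) * m ^ (2 * K) := ideal_add_le hb hc
end
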